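/- Let λ ∈ ℝ with λ ≠ 0, let c > 0, and let w : ℝ → ℂ be differentiable and f : ℝ → ℂ be such that w'(s) = λ·w(s) + f(s) for all s ∈ ℝ, |f(s)| < c for all s ∈ ℝ, and w(s) → 0 as s → +∞ and as s → −∞. Then |w(s)| ≤ √2·c/|λ| for all s ∈ ℝ. -/

import Mathlib

open Filter MeasureTheory intervalIntegral

/-- Auxiliary lemma: the stable case `lam < 0`, integrating from `-∞` gives
the bound `c / (-lam)`. -/
lemma ode_small_divisor_aux (lam : ℝ) (hlam : lam < 0) (c : ℝ) (hc : 0 < c)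
    (w f : ℝ → ℂ)
    (hw : ∀ s : ℝ, HasDerivAt w ((lam : ℂ) * w s + f s) s)
    (hf : ∀ s : ℝ, ‖f s‖ ≤ c)
    (hbot : Filter.Tendsto w Filter.atBot (nhds 0)) :
    ∀ s : ℝ, ‖w s‖ ≤ c / (-lam) := by
  have hwc : Continuous w := by
    have : Differentiable ℝ w := fun s => (hw s).differentiableAt
    exact this.continuous
  have hfm : Measurable f := by
    have hfe : f = fun s => deriv w s - (lam : ℂ) * w s := by
      funext s
      rw [(hw s).deriv]; ring
    rw [hfe]
    exact (measurable_deriv w).sub (measurable_const.mul hwc.measurable)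
  -- derivative of v t = exp(-lam t) * w t
  set v : ℝ → ℂ := fun t => Complex.exp (-(lam : ℂ) * t) * w t with hv_def
  have hce : Continuous fun t : ℝ => Complex.exp (-(lam : ℂ) * t) := by
    exact Complex.continuous_exp.comp (by continuity)
  have habs : ∀ t : ℝ, ‖Complex.exp (-(lam : ℂ) * t)‖ = Real.exp (-lam * t) := by
    intro t
    rw [Complex.norm_exp]
    norm_num
  have hv : ∀ t : ℝ, HasDerivAt v (Complex.exp (-(lam : ℂ) * t) * f t) t := by
    intro t
    have h1 : HasDerivAt (fun t : ℝ => -(lam : ℂ) * (t : ℂ)) (-(lam : ℂ)) t := by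
      simpa using (Complex.ofRealCLM.hasDerivAt (x := t)).const_mul (-(lam : ℂ))
    have h2 : HasDerivAt (fun t : ℝ => Complex.exp (-(lam : ℂ) * t))
        (Complex.exp (-(lam : ℂ) * t) * (-(lam : ℂ))) t := h1.cexp
    have h3 := h2.mul (hw t)
    refine h3.congr_deriv ?_
    ring
  intro s
  refine le_of_forall_pos_le_add ?_
  intro ε hε
  -- choose t₀ ≤ s with ‖w t₀‖ ≤ ε
  obtain ⟨t₀, ht₀s, ht₀⟩ : ∃ t₀, t₀ ≤ s ∧ ‖w t₀‖ ≤ ε := by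
    have h1 : ∀ᶠ t in atBot, ‖w t‖ < ε := by
      have := Metric.tendsto_nhds.mp hbot ε hε
      filter_upwards [this] with t ht
      simpa [dist_eq_norm] using ht
    have h2 : ∀ᶠ t in atBot, t ≤ s := eventually_le_atBot s
    obtain ⟨t₀, h, h'⟩ := (h2.and h1).exists
    exact ⟨t₀, h, h'.le⟩
  -- integrability of the integrand
  have hint : IntervalIntegrable (fun t => Complex.exp (-(lam : ℂ) * t) * f t)
      volume t₀ s := by
    rw [intervalIntegrable_iff]
    refine Integrable.mono' (g := fun _ => Real.exp (-lam * s) * c)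
      (integrableOn_const measure_Ioc_lt_top.ne)
      ((hce.measurable.mul hfm).aestronglyMeasurable) ?_
    filter_upwards [ae_restrict_mem measurableSet_uIoc] with t ht
    have hts : t ≤ s := by
      rcases Set.mem_uIoc.mp ht with h | h
      · exact h.2
      · exact le_trans h.2 ht₀s
    rw [norm_mul, habs]
    have h1 : Real.exp (-lam * t) ≤ Real.exp (-lam * s) := by
      apply Real.exp_le_exp.mpr; nlinarith
    have h2 : ‖f t‖ ≤ c := hf t
    have := norm_nonneg (f t)
    nlinarith [Real.exp_pos (-lam * t)]
  -- FTC
  have hFTC : ∫ t in t₀..s, Complex.exp (-(lam : ℂ) * t) * f t = v s - v t₀ :=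
    integral_eq_sub_of_hasDerivAt (fun t _ => hv t) hint
  -- compute the dominating integral
  have hgint : ∫ t in t₀..s, c * Real.exp (-lam * t)
      = c / (-lam) * Real.exp (-lam * s) - c / (-lam) * Real.exp (-lam * t₀) := by
    have hG : ∀ t : ℝ, HasDerivAt (fun t => c / (-lam) * Real.exp (-lam * t))
        (c * Real.exp (-lam * t)) t := by
      intro t
      have h1 : HasDerivAt (fun t : ℝ => -lam * t) (-lam) t := by
        simpa using (hasDerivAt_id t).const_mul (-lam)
      have h2 := (h1.exp).const_mul (c / (-lam))
      have hl : lam ≠ 0 := ne_of_lt hlam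
      refine h2.congr_deriv ?_
      field_simp
    have hcont : Continuous fun t : ℝ => c * Real.exp (-lam * t) := by continuity
    exact integral_eq_sub_of_hasDerivAt (fun t _ => hG t)
      (hcont.intervalIntegrable t₀ s)
  -- estimate the integral
  have hbound : ‖v s - v t₀‖ ≤ c / (-lam) * Real.exp (-lam * s) := by
    rw [← hFTC]
    have h1 : ‖∫ t in t₀..s, Complex.exp (-(lam : ℂ) * t) * f t‖
        ≤ |∫ t in t₀..s, c * Real.exp (-lam * t)| := by
      apply intervalIntegral.norm_integral_le_abs_of_norm_le
      · filter_upwards with t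
        rw [norm_mul, habs]
        have h2 : ‖f t‖ ≤ c := hf t
        have := norm_nonneg (f t)
        nlinarith [Real.exp_pos (-lam * t)]
      · exact (by continuity : Continuous fun t : ℝ => c * Real.exp (-lam * t)).intervalIntegrable t₀ s
    refine h1.trans ?_
    rw [hgint, abs_of_nonneg]
    · have h3 : Real.exp (-lam * t₀) ≤ Real.exp (-lam * s) := by
        apply Real.exp_le_exp.mpr; nlinarith
      have h4 : 0 < c / (-lam) := div_pos hc (by linarith)
      nlinarith [Real.exp_pos (-lam * t₀)]
    · have h3 : Real.exp (-lam * t₀) ≤ Real.exp (-lam * s) := by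
        apply Real.exp_le_exp.mpr; nlinarith
      have h4 : 0 < c / (-lam) := div_pos hc (by linarith)
      nlinarith
  -- put everything together
  have hvs : ‖v s‖ = Real.exp (-lam * s) * ‖w s‖ := by
    rw [hv_def]; simp only []
    rw [norm_mul, habs]
  have hvt₀ : ‖v t₀‖ = Real.exp (-lam * t₀) * ‖w t₀‖ := by
    rw [hv_def]; simp only []
    rw [norm_mul, habs]
  have h5 : ‖v s‖ ≤ ‖v t₀‖ + ‖v s - v t₀‖ := by
    have := norm_add_le (v t₀) (v s - v t₀)
    simpa using this
  have h6 : Real.exp (-lam * s) * ‖w s‖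
      ≤ Real.exp (-lam * t₀) * ε + c / (-lam) * Real.exp (-lam * s) := by
    rw [← hvs]
    refine h5.trans (add_le_add ?_ hbound)
    rw [hvt₀]
    exact mul_le_mul_of_nonneg_left ht₀ (Real.exp_pos _).le
  -- divide by exp(-lam*s)
  have h7 : Real.exp (-lam * t₀) ≤ Real.exp (-lam * s) := by
    apply Real.exp_le_exp.mpr; nlinarith
  have h8 : 0 < Real.exp (-lam * s) := Real.exp_pos _
  have h9 : Real.exp (-lam * s) * ‖w s‖ ≤ Real.exp (-lam * s) * (c / -lam + ε) := by
    nlinarith [mul_le_mul_of_nonneg_right h7 hε.le]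
  exact le_of_mul_le_mul_left h9 h8

/-- ODE bound in the presence of small divisors: if `w' = λw + f` with `λ ∈ ℝ \ {0}`,
`|f| < c` and `w(s) → 0` as `s → ±∞`, then `|w(s)| ≤ √2·c/|λ|` everywhere. -/
theorem ode_small_divisor_bound (lam : ℝ) (hlam : lam ≠ 0) (c : ℝ) (hc : 0 < c)
    (w f : ℝ → ℂ)
    (hw : ∀ s : ℝ, HasDerivAt w ((lam : ℂ) * w s + f s) s)
    (hf : ∀ s : ℝ, ‖f s‖ < c)
    (htop : Filter.Tendsto w Filter.atTop (nhds 0))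
    (hbot : Filter.Tendsto w Filter.atBot (nhds 0)) :
    ∀ s : ℝ, ‖w s‖ ≤ Real.sqrt 2 * c / |lam| := by
  have hsqrt : 1 ≤ Real.sqrt 2 := by
    rw [show (1 : ℝ) = Real.sqrt 1 by simp]
    exact Real.sqrt_le_sqrt (by norm_num)
  have hstep : ∀ s : ℝ, ‖w s‖ ≤ c / |lam| → ‖w s‖ ≤ Real.sqrt 2 * c / |lam| := by
    intro s h
    refine h.trans ?_
    rw [mul_div_assoc]
    have h0 : 0 ≤ c / |lam| := div_nonneg hc.le (abs_nonneg _)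
    nlinarith
  rcases lt_or_gt_of_ne hlam with hneg | hpos
  · intro s
    apply hstep
    have h := ode_small_divisor_aux lam hneg c hc w f hw (fun t => (hf t).le) hbot s
    rwa [abs_of_neg hneg]
  · -- reflect: w2 s = w (-s) solves the equation with -lam < 0
    have hw2 : ∀ s : ℝ, HasDerivAt (fun t => w (-t))
        (((-lam : ℝ) : ℂ) * w (-s) + (-f (-s))) s := by
      intro s
      have h1 : HasDerivAt (fun t : ℝ => -t) (-1 : ℝ) s := hasDerivAt_neg s
      have h2 := (hw (-s)).scomp s h1
      refine h2.congr_deriv ?_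
      push_cast
      simp [smul_eq_mul]
    have hbot2 : Filter.Tendsto (fun t => w (-t)) Filter.atBot (nhds 0) :=
      htop.comp tendsto_neg_atBot_atTop
    have haux := ode_small_divisor_aux (-lam) (by linarith) c hc
      (fun t => w (-t)) (fun t => -f (-t)) hw2
      (fun t => by simpa using (hf (-t)).le) hbot2
    intro s
    apply hstep
    have h := haux (-s)
    simpa [abs_of_pos hpos] using h
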